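/- trace((Φ∘A)∘(Φ∘A)) = trace(A∘A), and if A ≠ 0 then trace(A∘A) > 0. (Pointwise positivity of the metric Ω_Φ(·, J_Φ ·) underlying the Kähler structure on the space 𝒦_η of K-contact structures.) -/

import Mathlib

/-- trace((Φ∘A)∘(Φ∘A)) = trace(A∘A), and trace(A∘A) > 0 if A ≠ 0: pointwise
positivity of the metric underlying the Kähler structure on 𝒦_η. -/
theorem kcontact_trace_positivity
    {V : Type*} [AddCommGroup V] [Module ℝ V] [FiniteDimensional ℝ V]
    (η : V →ₗ[ℝ] ℝ) (ξ : V) (Φ : V →ₗ[ℝ] V)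
    (Ω : V →ₗ[ℝ] V →ₗ[ℝ] ℝ)
    (hη : η ξ = 1)
    (hΦ : ∀ X : V, Φ (Φ X) = -X + η X • ξ)
    (hΩalt : ∀ X : V, Ω X X = 0)
    (hΩξ : ∀ X : V, Ω ξ X = 0)
    (hΩΦ : ∀ X Y : V, Ω (Φ X) (Φ Y) = Ω X Y)
    (hΩpos : ∀ Z : V, η Z = 0 → Z ≠ 0 → 0 < Ω Z (Φ Z))
    (g : V → V → ℝ)
    (hg : ∀ X Y : V, g X Y = Ω X (Φ Y) + η X * η Y)
    (A : V →ₗ[ℝ] V)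
    (hAξ : A ξ = 0)
    (hAΦ : ∀ X : V, A (Φ X) + Φ (A X) = 0)
    (hAΩ : ∀ X Y : V, Ω (A X) Y + Ω X (A Y) = 0) :
    LinearMap.trace ℝ V ((Φ ∘ₗ A) ∘ₗ (Φ ∘ₗ A)) = LinearMap.trace ℝ V (A ∘ₗ A) ∧
    (A ≠ 0 → 0 < LinearMap.trace ℝ V (A ∘ₗ A)) := by
  -- Ω is skew-symmetric
  have hskew : ∀ X Y : V, Ω X Y = - Ω Y X := by
    intro X Y
    have h := hΩalt (X + Y)
    simp only [map_add, LinearMap.add_apply, hΩalt] at h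
    linarith
  have hAΦ' : ∀ X : V, A (Φ X) = - Φ (A X) := fun X =>
    eq_neg_of_add_eq_zero_left (hAΦ X)
  -- η ∘ A = 0
  have hηA : ∀ X : V, η (A X) = 0 := by
    intro X
    have h := hAΦ (Φ X)
    rw [hΦ X, hAΦ' X, map_neg, hΦ (A X)] at h
    -- h : A (-X + η X • ξ) + -(-(A X) + η (A X) • ξ) = 0
    rw [map_add, map_neg, map_smul, hAξ, smul_zero] at h
    have h2 : -(η (A X) • ξ) = 0 := by
      have := h
      abel_nf at this ⊢
      linear_combination (norm := abel) this
    have h3 : η (A X) • ξ = 0 := by rwa [neg_eq_zero] at h2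
    have := congrArg η h3
    rw [map_smul, hη, smul_eq_mul, mul_one, map_zero] at this
    exact this
  -- Ω (·, Φ ξ) = 0
  have hΦξ : ∀ X : V, Ω X (Φ ξ) = 0 := by
    intro X
    have h1 : Φ (Φ ξ) = 0 := by rw [hΦ ξ, hη, one_smul]; abel
    have := hΩΦ X (Φ ξ)
    rw [h1, map_zero] at this
    exact this.symm
  -- symmetry of g-part
  have hsymm : ∀ X Y : V, Ω X (Φ Y) = Ω Y (Φ X) := by
    intro X Y
    have h := hΩΦ X (Φ Y)
    rw [hΦ Y] at h
    rw [map_add, map_neg, map_smul] at h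
    have hΩΦXξ : Ω (Φ X) ξ = 0 := by rw [hskew (Φ X) ξ, hΩξ, neg_zero]
    rw [hΩΦXξ, smul_zero, add_zero] at h
    -- h : -Ω (Φ X) Y = Ω X (Φ Y)
    rw [← h, hskew (Φ X) Y, neg_neg]
  -- positive definiteness of g
  have hposdef : ∀ X : V, X ≠ 0 → 0 < Ω X (Φ X) + η X * η X := by
    intro X hX
    set Z : V := X - η X • ξ with hZ
    have hηZ : η Z = 0 := by simp [hZ, hη]
    have hXZ : X = Z + η X • ξ := by simp [hZ]
    have hexp : Ω X (Φ X) = Ω Z (Φ Z) := by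
      rw [hXZ]
      simp only [map_add, map_smul, LinearMap.add_apply, LinearMap.smul_apply,
        hΩξ, smul_eq_mul, mul_zero, add_zero]
      rw [hΦξ Z]
      ring
    rw [hexp]
    rcases eq_or_ne Z 0 with hZ0 | hZ0
    · have hηX : η X ≠ 0 := by
        intro h0
        apply hX
        rw [hXZ, hZ0, h0, zero_smul, add_zero]
      rw [hZ0]
      simp only [map_zero, LinearMap.zero_apply, zero_add]
      exact mul_self_pos.mpr hηX
    · have hpos := hΩpos Z hηZ hZ0
      nlinarith [mul_self_nonneg (η X)]
  -- inner product core
  letI core : InnerProductSpace.Core ℝ V :=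
    { inner := fun X Y => Ω X (Φ Y) + η X * η Y
      conj_inner_symm := by
        intro x y
        simp only [starRingEnd_apply, star_trivial]
        rw [hsymm y x]; ring
      re_inner_nonneg := by
        intro x
        rcases eq_or_ne x 0 with h0 | h0
        · simp [h0]
        · have := hposdef x h0
          simpa using this.le
      add_left := by
        intro x y z
        simp only [map_add, LinearMap.add_apply]
        ring
      smul_left := by
        intro x y r
        simp only [map_smul, LinearMap.smul_apply, smul_eq_mul, starRingEnd_apply,
          star_trivial]
        ring
      definite := by
        intro x hx
        by_contra h0
        have hp := hposdef x h0
        have hx' : Ω x (Φ x) + η x * η x = 0 := hx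
        linarith }
  letI : NormedAddCommGroup V := core.toNormedAddCommGroup
  letI : InnerProductSpace ℝ V := InnerProductSpace.ofCore core.toCore
  have hinner : ∀ X Y : V, (inner ℝ X Y : ℝ) = Ω X (Φ Y) + η X * η Y := fun _ _ => rfl
  -- A is self-adjoint w.r.t. inner
  have hsa : ∀ X Y : V, (inner ℝ (A X) Y : ℝ) = inner ℝ X (A Y) := by
    intro X Y
    rw [hinner, hinner, hηA, hηA, zero_mul, mul_zero, add_zero, add_zero]
    have h1 : Ω X (Φ (A Y)) = - Ω X (A (Φ Y)) := by rw [hAΦ' Y, map_neg, neg_neg]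
    linarith [hAΩ X (Φ Y), h1]
  -- the first claim : the maps are equal
  have hmap : (Φ ∘ₗ A) ∘ₗ (Φ ∘ₗ A) = A ∘ₗ A := by
    ext X
    simp only [LinearMap.comp_apply]
    rw [hAΦ' (A X), map_neg, hΦ (A (A X)), hηA, zero_smul, add_zero, neg_neg]
  refine ⟨by rw [hmap], ?_⟩
  intro hA
  -- trace via orthonormal basis
  let b := stdOrthonormalBasis ℝ V
  have htr : LinearMap.trace ℝ V (A ∘ₗ A) =
      ∑ i, (inner ℝ (b i) (A (A (b i))) : ℝ) := by
    rw [LinearMap.trace_eq_matrix_trace ℝ b.toBasis, Matrix.trace]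
    congr 1
    ext i
    rw [Matrix.diag_apply, LinearMap.toMatrix_apply, b.coe_toBasis,
      b.coe_toBasis_repr_apply, b.repr_apply_apply]
    simp
  have htr2 : LinearMap.trace ℝ V (A ∘ₗ A) = ∑ i, ‖A (b i)‖ ^ 2 := by
    rw [htr]
    congr 1
    ext i
    rw [← hsa (b i) (A (b i))]
    rw [real_inner_comm, real_inner_self_eq_norm_sq]
  rw [htr2]
  have hnonneg : ∀ i, (0:ℝ) ≤ ‖A (b i)‖ ^ 2 := fun i => sq_nonneg _
  have hex : ∃ i, A (b i) ≠ 0 := by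
    by_contra h
    push_neg at h
    apply hA
    apply b.toBasis.ext
    intro i
    simp [h i]
  obtain ⟨i, hi⟩ := hex
  have : 0 < ‖A (b i)‖ ^ 2 := pow_pos (norm_pos_iff.mpr hi) 2
  exact Finset.sum_pos' (fun j _ => hnonneg j) ⟨i, Finset.mem_univ i, this⟩
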